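/- A Tiles instance with sharing number at most 1 is solvable by a play consisting solely of standard moves (no teleport moves) if and only if its structure graph admits an Eulerian trail whose two endpoints (possibly equal) are both tile vertices. -/

import Mathlib

/-- One move of the Tiles game, from position `a` to position `b`. -/
def TilesStep {n : ℕ} {F : Type} [DecidableEq F] (U : Fin n → Finset F) (a b : Fin n) :
    Fin n → Finset F :=
  if (U a ∩ U b).Nonempty then
    fun i => if i = a ∨ i = b then U i \ (U a ∩ U b) else U i
  else U

/-- The state after the first `t` moves of the play `p`, starting from `T`. -/
def TilesState {n : ℕ} {F : Type} [DecidableEq F] (T : Fin n → Finset F) (p : ℕ → Fin n) :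
    ℕ → (Fin n → Finset F)
  | 0 => T
  | t + 1 => TilesStep (TilesState T p t) (p t) (p (t + 1))

/-- `p 0, …, p m` is a play: consecutive positions are distinct. -/
def TilesIsPlay {n : ℕ} (m : ℕ) (p : ℕ → Fin n) : Prop :=
  ∀ t < m, p t ≠ p (t + 1)

/-- The play solves the instance: the final state is everywhere empty. -/
def TilesSolves {n : ℕ} {F : Type} [DecidableEq F] (T : Fin n → Finset F)
    (m : ℕ) (p : ℕ → Fin n) : Prop :=
  ∀ i, TilesState T p m i = ∅

/-- Every move of the play is standard (no teleport moves): at each step the current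
sets at the two involved positions intersect. -/
def TilesAllStandard {n : ℕ} {F : Type} [DecidableEq F] (T : Fin n → Finset F)
    (m : ℕ) (p : ℕ → Fin n) : Prop :=
  ∀ t < m, (TilesState T p t (p t) ∩ TilesState T p t (p (t + 1))).Nonempty

/-- The structure graph of a Tiles instance: the bipartite graph on tile positions and
features, with an edge between tile position `i` and feature `f` iff `f ∈ T i`. -/
def structureGraph {n : ℕ} {F : Type} [DecidableEq F] (T : Fin n → Finset F) :
    SimpleGraph (Fin n ⊕ F) :=
  SimpleGraph.fromRel (fun x y => ∃ (i : Fin n) (f : F), x = Sum.inl i ∧ y = Sum.inr f ∧ f ∈ T i)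

namespace TilesAux
open SimpleGraph Sum
set_option linter.unusedSectionVars false
set_option linter.unreachableTactic false
set_option linter.unusedTactic false

variable {n : ℕ} {F : Type} [DecidableEq F]

lemma pair_eq_pair {i j : Fin n} {f g : F} :
    s(Sum.inl i, (Sum.inr f : Fin n ⊕ F)) = s(Sum.inl j, Sum.inr g) ↔ i = j ∧ f = g := by
  rw [Sym2.eq_iff]
  constructor
  · rintro (⟨h1, h2⟩ | ⟨h1, h2⟩)
    · exact ⟨Sum.inl.inj h1, Sum.inr.inj h2⟩
    · exact absurd h1 (by simp)
  · rintro ⟨rfl, rfl⟩; left; exact ⟨rfl, rfl⟩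

lemma adj_iff (T : Fin n → Finset F) (i : Fin n) (f : F) :
    (structureGraph T).Adj (Sum.inl i) (Sum.inr f) ↔ f ∈ T i := by
  simp [structureGraph, SimpleGraph.fromRel_adj]

lemma mem_edgeSet_iff (T : Fin n → Finset F) (e : Sym2 (Fin n ⊕ F)) :
    e ∈ (structureGraph T).edgeSet ↔ ∃ i f, f ∈ T i ∧ e = s(Sum.inl i, Sum.inr f) := by
  refine Sym2.ind (fun x y => ?_) e
  simp only [SimpleGraph.mem_edgeSet, structureGraph, SimpleGraph.fromRel_adj]
  constructor
  · rintro ⟨hne, (⟨i, f, rfl, rfl, hf⟩ | ⟨i, f, rfl, rfl, hf⟩)⟩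
    · exact ⟨i, f, hf, rfl⟩
    · exact ⟨i, f, hf, Sym2.eq_swap.symm⟩
  · rintro ⟨i, f, hf, he⟩
    rw [Sym2.eq_iff] at he
    rcases he with ⟨rfl, rfl⟩ | ⟨rfl, rfl⟩
    · exact ⟨by simp, Or.inl ⟨i, f, rfl, rfl, hf⟩⟩
    · exact ⟨by simp, Or.inr ⟨i, f, rfl, rfl, hf⟩⟩

lemma adj_inl {T : Fin n → Finset F} {i : Fin n} {x : Fin n ⊕ F}
    (h : (structureGraph T).Adj (Sum.inl i) x) : ∃ f, x = Sum.inr f ∧ f ∈ T i := by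
  rcases h with ⟨hne, (⟨j, f, hj, rfl, hf⟩ | ⟨j, f, rfl, hj, hf⟩)⟩
  · exact ⟨f, rfl, Sum.inl.inj hj ▸ hf⟩
  · exact absurd hj (by simp)

lemma adj_inr {T : Fin n → Finset F} {f : F} {x : Fin n ⊕ F}
    (h : (structureGraph T).Adj (Sum.inr f) x) : ∃ i, x = Sum.inl i ∧ f ∈ T i := by
  rcases h with ⟨hne, (⟨j, g, hj, hg, hf⟩ | ⟨j, g, rfl, hg, hf⟩)⟩
  · exact absurd hj (by simp)
  · exact ⟨j, rfl, Sum.inr.inj hg ▸ hf⟩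

lemma step_eq {T : Fin n → Finset F} {a b : Fin n} {f : F} (h : T a ∩ T b = {f}) :
    TilesStep T a b = fun i => if i = a ∨ i = b then T i \ {f} else T i := by
  simp only [TilesStep, h, if_pos (Finset.singleton_nonempty f)]

lemma mem_step {T : Fin n → Finset F} {a b : Fin n} {f : F} (h : T a ∩ T b = {f})
    (i : Fin n) (g : F) :
    g ∈ TilesStep T a b i ↔ g ∈ T i ∧ ¬(g = f ∧ (i = a ∨ i = b)) := by
  rw [step_eq h]
  by_cases hi : i = a ∨ i = b <;> simp [hi] <;> tauto

lemma inter_eq_singleton {T : Fin n → Finset F}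
    (hshare : ∀ i j : Fin n, i ≠ j → (T i ∩ T j).card ≤ 1) {a b : Fin n} {f : F}
    (hab : a ≠ b) (hfa : f ∈ T a) (hfb : f ∈ T b) : T a ∩ T b = {f} := by
  refine Finset.eq_singleton_iff_unique_mem.mpr ⟨Finset.mem_inter.mpr ⟨hfa, hfb⟩, fun g hg => ?_⟩
  exact Finset.card_le_one.mp (hshare a b hab) g hg f (Finset.mem_inter.mpr ⟨hfa, hfb⟩)

lemma step_subset (T : Fin n → Finset F) (a b i : Fin n) : TilesStep T a b i ⊆ T i := by
  unfold TilesStep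
  split
  · dsimp only; split
    · exact Finset.sdiff_subset
    · exact subset_rfl
  · exact subset_rfl

lemma step_share {T : Fin n → Finset F}
    (hshare : ∀ i j : Fin n, i ≠ j → (T i ∩ T j).card ≤ 1) (a b : Fin n) :
    ∀ i j : Fin n, i ≠ j → (TilesStep T a b i ∩ TilesStep T a b j).card ≤ 1 := fun i j hij =>
  le_trans (Finset.card_le_card
    (Finset.inter_subset_inter (step_subset T a b i) (step_subset T a b j))) (hshare i j hij)

lemma edge_decomp {T : Fin n → Finset F} {a b : Fin n} {f : F}
    (h : T a ∩ T b = {f}) (e : Sym2 (Fin n ⊕ F)) :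
    e ∈ (structureGraph T).edgeSet ↔
      e ∈ (structureGraph (TilesStep T a b)).edgeSet ∨
        e = s(Sum.inl a, Sum.inr f) ∨ e = s(Sum.inl b, Sum.inr f) := by
  have hfa : f ∈ T a := (Finset.mem_inter.mp (h ▸ Finset.mem_singleton_self f)).1
  have hfb : f ∈ T b := (Finset.mem_inter.mp (h ▸ Finset.mem_singleton_self f)).2
  rw [mem_edgeSet_iff, mem_edgeSet_iff]
  constructor
  · rintro ⟨i, g, hg, rfl⟩
    by_cases hg' : g ∈ TilesStep T a b i
    · exact Or.inl ⟨i, g, hg', rfl⟩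
    · rw [mem_step h] at hg'
      push_neg at hg'
      obtain ⟨rfl, hi⟩ := hg' hg
      rcases hi with rfl | rfl
      · exact Or.inr (Or.inl rfl)
      · exact Or.inr (Or.inr rfl)
  · rintro (⟨i, g, hg, rfl⟩ | rfl | rfl)
    · exact ⟨i, g, step_subset T a b i hg, rfl⟩
    · exact ⟨a, f, hfa, rfl⟩
    · exact ⟨b, f, hfb, rfl⟩

lemma not_mem_step_a {T : Fin n → Finset F} {a b : Fin n} {f : F} (h : T a ∩ T b = {f}) :
    s(Sum.inl a, (Sum.inr f : Fin n ⊕ F)) ∉ (structureGraph (TilesStep T a b)).edgeSet := by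
  rw [mem_edgeSet_iff]
  rintro ⟨i, g, hg, he⟩
  obtain ⟨rfl, rfl⟩ := pair_eq_pair.mp he.symm  -- i = a? careful direction
  rw [mem_step h] at hg
  exact hg.2 ⟨rfl, Or.inl rfl⟩

lemma not_mem_step_b {T : Fin n → Finset F} {a b : Fin n} {f : F} (h : T a ∩ T b = {f}) :
    s(Sum.inl b, (Sum.inr f : Fin n ⊕ F)) ∉ (structureGraph (TilesStep T a b)).edgeSet := by
  rw [mem_edgeSet_iff]
  rintro ⟨i, g, hg, he⟩
  obtain ⟨rfl, rfl⟩ := pair_eq_pair.mp he.symm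
  rw [mem_step h] at hg
  exact hg.2 ⟨rfl, Or.inr rfl⟩

lemma state_shift (T : Fin n → Finset F) (p : ℕ → Fin n) (t : ℕ) :
    TilesState (TilesStep T (p 0) (p 1)) (fun s => p (s + 1)) t = TilesState T p (t + 1) := by
  induction t with
  | zero => rfl
  | succ t ih =>
    show TilesStep _ _ _ = TilesStep _ _ _
    rw [ih]

lemma count_zero_of_not_edge {G : SimpleGraph (Fin n ⊕ F)} {u v : Fin n ⊕ F}
    (w : G.Walk u v) {e : Sym2 (Fin n ⊕ F)} (h : e ∉ G.edgeSet) : w.edges.count e = 0 :=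
  List.count_eq_zero_of_not_mem (fun hm => h (w.edges_subset_edgeSet hm))

lemma forward : ∀ (m : ℕ) (T : Fin n → Finset F),
    (∀ i j : Fin n, i ≠ j → (T i ∩ T j).card ≤ 1) → ∀ (p : ℕ → Fin n),
    TilesIsPlay m p → TilesAllStandard T m p → TilesSolves T m p →
    ∃ w : (structureGraph T).Walk (Sum.inl (p 0)) (Sum.inl (p m)), w.IsEulerian := by
  intro m
  induction m with
  | zero =>
    intro T hs p _ _ hsol
    refine ⟨SimpleGraph.Walk.nil, fun e he => ?_⟩
    rw [mem_edgeSet_iff] at he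
    obtain ⟨i, f, hf, _⟩ := he
    rw [show T i = ∅ from hsol i] at hf
    exact absurd hf (Finset.notMem_empty f)
  | succ m ih =>
    intro T hs p hplay hstd hsol
    have hab : p 0 ≠ p 1 := hplay 0 (Nat.succ_pos m)
    have hne : (T (p 0) ∩ T (p 1)).Nonempty := hstd 0 (Nat.succ_pos m)
    obtain ⟨f, hfmem⟩ := hne
    have hfa : f ∈ T (p 0) := (Finset.mem_inter.mp hfmem).1
    have hfb : f ∈ T (p 1) := (Finset.mem_inter.mp hfmem).2
    have hsing : T (p 0) ∩ T (p 1) = {f} := inter_eq_singleton hs hab hfa hfb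
    set T' := TilesStep T (p 0) (p 1) with hT'
    set p' : ℕ → Fin n := fun s => p (s + 1) with hp'
    have hstate : ∀ t, TilesState T' p' t = TilesState T p (t + 1) := state_shift T p
    have hplay' : TilesIsPlay m p' := fun t ht => hplay (t + 1) (by omega)
    have hstd' : TilesAllStandard T' m p' := fun t ht => by
      rw [hstate]; exact hstd (t + 1) (by omega)
    have hsol' : TilesSolves T' m p' := fun i => by rw [hstate]; exact hsol i
    obtain ⟨w', hw'⟩ := ih T' (step_share hs (p 0) (p 1)) p' hplay' hstd' hsol'
    have hsub : ∀ e ∈ w'.edges, e ∈ (structureGraph T).edgeSet := fun e he =>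
      (edge_decomp hsing e).mpr (Or.inl (w'.edges_subset_edgeSet he))
    refine ⟨SimpleGraph.Walk.cons ((adj_iff T (p 0) f).mpr hfa)
      (SimpleGraph.Walk.cons ((adj_iff T (p 1) f).mpr hfb).symm
        (w'.transfer (structureGraph T) hsub)), fun e he => ?_⟩
    rw [SimpleGraph.Walk.edges_cons, SimpleGraph.Walk.edges_cons,
      SimpleGraph.Walk.edges_transfer]
    have he2eq : s(Sum.inr f, (Sum.inl (p 1) : Fin n ⊕ F)) = s(Sum.inl (p 1), Sum.inr f) :=
      Sym2.eq_swap
    rw [edge_decomp hsing e] at he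
    rcases he with he' | rfl | rfl
    · have h1 : e ≠ s(Sum.inl (p 0), Sum.inr f) := by
        rintro rfl; exact not_mem_step_a hsing he'
      have h2 : e ≠ s(Sum.inr f, Sum.inl (p 1)) := by
        rintro rfl; rw [he2eq] at he'; exact not_mem_step_b hsing he'
      rw [List.count_cons_of_ne h1.symm, List.count_cons_of_ne h2.symm]
      exact hw' e he'
    · rw [List.count_cons_self]
      have h2 : s(Sum.inl (p 0), (Sum.inr f : Fin n ⊕ F)) ≠ s(Sum.inr f, Sum.inl (p 1)) := by
        rw [he2eq, Ne, pair_eq_pair]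
        rintro ⟨h, -⟩; exact hab h
      rw [List.count_cons_of_ne h2.symm,
        count_zero_of_not_edge w' (not_mem_step_a hsing)]
    · have h1 : s(Sum.inl (p 1), (Sum.inr f : Fin n ⊕ F)) ≠ s(Sum.inl (p 0), Sum.inr f) := by
        rw [Ne, pair_eq_pair]; rintro ⟨h, -⟩; exact hab h.symm
      rw [List.count_cons_of_ne h1.symm, ← he2eq, List.count_cons_self,
        count_zero_of_not_edge w' (by rw [he2eq]; exact not_mem_step_b hsing)]


lemma backward : ∀ (N : ℕ) (T : Fin n → Finset F),
    (∀ i j : Fin n, i ≠ j → (T i ∩ T j).card ≤ 1) → ∀ (a b : Fin n)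
    (w : (structureGraph T).Walk (Sum.inl a) (Sum.inl b)), w.length ≤ N → w.IsEulerian →
    ∃ m p, p 0 = a ∧ TilesIsPlay m p ∧ TilesAllStandard T m p ∧ TilesSolves T m p := by
  intro N
  induction N with
  | zero =>
    intro T hs a b w hlen hE
    cases w with
    | nil =>
      refine ⟨0, fun _ => a, rfl, fun t ht => absurd ht (Nat.not_lt_zero t),
        fun t ht => absurd ht (Nat.not_lt_zero t), fun i => ?_⟩
      show T i = ∅
      refine Finset.eq_empty_iff_forall_notMem.mpr fun f hf => ?_
      have := hE s(Sum.inl i, Sum.inr f) ((mem_edgeSet_iff T _).mpr ⟨i, f, hf, rfl⟩)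
      simp at this
    | cons h w₁ => simp [SimpleGraph.Walk.length_cons] at hlen
  | succ N ihN =>
    intro T hs a b w hlen hE
    cases w with
    | nil =>
      refine ⟨0, fun _ => a, rfl, fun t ht => absurd ht (Nat.not_lt_zero t),
        fun t ht => absurd ht (Nat.not_lt_zero t), fun i => ?_⟩
      show T i = ∅
      refine Finset.eq_empty_iff_forall_notMem.mpr fun f hf => ?_
      have := hE s(Sum.inl i, Sum.inr f) ((mem_edgeSet_iff T _).mpr ⟨i, f, hf, rfl⟩)
      simp at this
    | @cons _ x _ hadj w₁ =>
      obtain ⟨f, rfl, hfa⟩ := adj_inl hadj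
      cases w₁ with
      | @cons _ y _ hadj2 w₂ =>
        obtain ⟨c, rfl, hfc⟩ := adj_inr hadj2
        have hnd := hE.isTrail.edges_nodup
        rw [SimpleGraph.Walk.edges_cons, SimpleGraph.Walk.edges_cons,
          List.nodup_cons, List.nodup_cons] at hnd
        have hac : a ≠ c := by
          rintro rfl
          exact hnd.1 (List.mem_cons.mpr (Or.inl Sym2.eq_swap))
        have hsing : T a ∩ T c = {f} := inter_eq_singleton hs hac hfa hfc
        set T' := TilesStep T a c with hT'
        -- edges of w₂ lie in structureGraph T'
        have hsub : ∀ e ∈ w₂.edges, e ∈ (structureGraph T').edgeSet := by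
          intro e he
          have heT := w₂.edges_subset_edgeSet he
          rw [edge_decomp hsing e] at heT
          rcases heT with h' | rfl | rfl
          · exact h'
          · exact absurd he (fun hmem => hnd.1 ((List.mem_cons).mpr (Or.inr hmem)))
          · exact absurd he (fun hmem => hnd.2.1 (by rwa [Sym2.eq_swap]))
        have hE' : (w₂.transfer (structureGraph T') hsub).IsEulerian := by
          intro e he'
          rw [SimpleGraph.Walk.edges_transfer]
          have heT : e ∈ (structureGraph T).edgeSet := (edge_decomp hsing e).mpr (Or.inl he')
          have := hE e heT
          rw [SimpleGraph.Walk.edges_cons, SimpleGraph.Walk.edges_cons,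
            List.count_cons_of_ne, List.count_cons_of_ne] at this
          · exact this
          · rintro rfl
            rw [Sym2.eq_swap] at he'
            exact not_mem_step_b hsing he'
          · rintro rfl
            exact not_mem_step_a hsing he'
        have hlen' : (w₂.transfer (structureGraph T') hsub).length ≤ N := by
          rw [SimpleGraph.Walk.length_transfer]
          simp only [SimpleGraph.Walk.length_cons] at hlen
          omega
        obtain ⟨m, p', hp0, hplay', hstd', hsol'⟩ :=
          ihN T' (step_share hs a c) c b (w₂.transfer (structureGraph T') hsub) hlen' hE'
        refine ⟨m + 1, fun t => if t = 0 then a else p' (t - 1), rfl, ?_, ?_, ?_⟩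
        · intro t ht
          match t with
          | 0 => show a ≠ p' 0; rw [hp0]; exact hac
          | t + 1 => show p' t ≠ p' (t + 1); exact hplay' t (by omega)
        · have hstep : TilesStep T a (p' 0) = T' := by rw [hp0]
          have key : ∀ t, TilesState T (fun t => if t = 0 then a else p' (t - 1)) (t + 1)
              = TilesState T' p' t := by
            intro t
            rw [← state_shift T (fun t => if t = 0 then a else p' (t - 1)) t]
            show TilesState (TilesStep T a (p' 0)) _ t = _
            rw [hstep]
            congr 1
          intro t ht
          match t with
          | 0 =>
            show (T a ∩ T (p' 0)).Nonempty
            rw [hp0]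
            exact ⟨f, Finset.mem_inter.mpr ⟨hfa, hfc⟩⟩
          | t + 1 =>
            show ((TilesState T _ (t + 1)) (p' t) ∩ (TilesState T _ (t + 1)) (p' (t + 1))).Nonempty
            rw [key t]
            exact hstd' t (by omega)
        · have hstep : TilesStep T a (p' 0) = T' := by rw [hp0]
          have key : ∀ t, TilesState T (fun t => if t = 0 then a else p' (t - 1)) (t + 1)
              = TilesState T' p' t := by
            intro t
            rw [← state_shift T (fun t => if t = 0 then a else p' (t - 1)) t]
            show TilesState (TilesStep T a (p' 0)) _ t = _
            rw [hstep]
            congr 1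
          intro i
          show TilesState T _ (m + 1) i = ∅
          rw [key m]
          exact hsol' i

end TilesAux

/-- A Tiles instance with sharing number at most 1 is solvable by a play consisting
solely of standard moves iff its structure graph has an Eulerian trail whose endpoints
are both tile vertices. -/
theorem tiles_no_teleport_iff_eulerian {n : ℕ} {F : Type} [DecidableEq F]
    (T : Fin n → Finset F)
    (hshare : ∀ i j : Fin n, i ≠ j → (T i ∩ T j).card ≤ 1) :
    (∃ m p, TilesIsPlay m p ∧ TilesAllStandard T m p ∧ TilesSolves T m p) ↔
    (∃ (a b : Fin n) (w : (structureGraph T).Walk (Sum.inl a) (Sum.inl b)), w.IsEulerian) := by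
  constructor
  · rintro ⟨m, p, hplay, hstd, hsol⟩
    exact ⟨p 0, p m, TilesAux.forward m T hshare p hplay hstd hsol⟩
  · rintro ⟨a, b, w, hw⟩
    obtain ⟨m, p, -, hplay, hstd, hsol⟩ :=
      TilesAux.backward w.length T hshare a b w le_rfl hw
    exact ⟨m, p, hplay, hstd, hsol⟩
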